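/- Let p ∈ [1,2] and let X be a Banach space with Rademacher type p with constant T. There exists a constant C = C(p,T) > 0 such that for every n ∈ ℕ, every even integer m ≥ 2, every odd integer k with 0 < k < m/2, and every f : ℤ_m^n → X, ∫_{ℤ_m^n} ∫_{{−1,1}^n} ‖ Σ_{j=1}^n ε_j [ ℰ_j f(x + e_j) − ℰ_j f(x − e_j) ] ‖_X^p dτ(ε) dμ(x) ≤ C Σ_{j=1}^n ∫_{ℤ_m^n} ‖f(x + e_j) − f(x)‖_X^p dμ(x). -/

import Mathlib

open Finset

/-- A Banach space `X` has Rademacher type `p` with constant `T`: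
for every `n` and every `v : Fin n → X`,
`𝔼_ε ‖∑ j, ε j • v j‖ ^ p ≤ T ^ p * ∑ j, ‖v j‖ ^ p`, where `ε` is uniform on `{-1,1}^n`. -/
def RademacherType (X : Type*) [NormedAddCommGroup X] [NormedSpace ℝ X] (p T : ℝ) : Prop :=
  ∀ (n : ℕ) (v : Fin n → X),
    (∑ ε : Fin n → Bool, ‖∑ j, (if ε j then (1 : ℝ) else -1) • v j‖ ^ p) / 2 ^ n ≤
      T ^ p * ∑ j, ‖v j‖ ^ p

open scoped Classical in
/-- `S(j,k)` is the set of `y ∈ ℤ_m^n` with `y_j` even, `y_l` odd for all `l ≠ j`, and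
`d_{ℤ_m^n}(0,y) = ∑_i min(y_i, m - y_i) ≤ k`. -/
noncomputable def Sjk (m n k : ℕ) [NeZero m] (j : Fin n) : Finset (Fin n → ZMod m) :=
  Finset.univ.filter fun y =>
    Even (y j).val ∧ (∀ l, l ≠ j → ¬Even (y l).val) ∧
      (∑ i, min (y i).val (m - (y i).val)) ≤ k

/-- The averaging operator `ℰ_j f(x) = (1/|S(j,k)|) ∑_{y ∈ S(j,k)} f(x + y)`. -/
noncomputable def Ecal (m n k : ℕ) [NeZero m] {X : Type*} [NormedAddCommGroup X]
    [NormedSpace ℝ X] (j : Fin n) (f : (Fin n → ZMod m) → X)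
    (x : Fin n → ZMod m) : X :=
  ((Sjk m n k j).card : ℝ)⁻¹ • ∑ y ∈ Sjk m n k j, f (x + y)

section Aux

variable {X : Type*} [NormedAddCommGroup X] [NormedSpace ℝ X]

lemma jensen_norm_rpow (p : ℝ) (hp : 1 ≤ p) {ι : Type*} (s : Finset ι) (g : ι → X) :
    ‖(s.card : ℝ)⁻¹ • ∑ y ∈ s, g y‖ ^ p ≤ (s.card : ℝ)⁻¹ * ∑ y ∈ s, ‖g y‖ ^ p := by
  rcases s.eq_empty_or_nonempty with rfl | hs
  · simp [Real.zero_rpow (by linarith : p ≠ 0)]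
  · have hN : (0:ℝ) < s.card := by exact_mod_cast hs.card_pos
    have h1 : ‖(s.card : ℝ)⁻¹ • ∑ y ∈ s, g y‖ ≤ ∑ y ∈ s, (s.card : ℝ)⁻¹ * ‖g y‖ := by
      rw [norm_smul, ← Finset.mul_sum]
      have : ‖((s.card : ℝ))⁻¹‖ = (s.card : ℝ)⁻¹ := by
        rw [Real.norm_eq_abs, abs_of_nonneg (inv_nonneg.2 hN.le)]
      rw [this]
      exact mul_le_mul_of_nonneg_left (norm_sum_le _ _) (inv_nonneg.2 hN.le)
    calc ‖(s.card : ℝ)⁻¹ • ∑ y ∈ s, g y‖ ^ p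
        ≤ (∑ y ∈ s, (s.card : ℝ)⁻¹ * ‖g y‖) ^ p :=
          Real.rpow_le_rpow (norm_nonneg _) h1 (by linarith)
      _ ≤ ∑ y ∈ s, (s.card : ℝ)⁻¹ * ‖g y‖ ^ p :=
          Real.rpow_arith_mean_le_arith_mean_rpow s _ _
            (fun _ _ => inv_nonneg.2 hN.le)
            (by rw [Finset.sum_const, nsmul_eq_mul]; field_simp)
            (fun _ _ => norm_nonneg _) hp
      _ = (s.card : ℝ)⁻¹ * ∑ y ∈ s, ‖g y‖ ^ p := by rw [Finset.mul_sum]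

lemma sum_shift {m n : ℕ} [NeZero m] (h : (Fin n → ZMod m) → ℝ) (y : Fin n → ZMod m) :
    ∑ x : Fin n → ZMod m, h (x + y) = ∑ x : Fin n → ZMod m, h x :=
  Fintype.sum_equiv (Equiv.addRight y) _ _ (fun _ => rfl)

lemma norm_add_rpow_le (p : ℝ) (hp : 1 ≤ p) (a b : X) :
    ‖a + b‖ ^ p ≤ 2 ^ p * (‖a‖ ^ p + ‖b‖ ^ p) := by
  have h1 : ‖a + b‖ ≤ 2 * max ‖a‖ ‖b‖ := by
    refine (norm_add_le a b).trans ?_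
    rcases max_cases ‖a‖ ‖b‖ with ⟨h, h'⟩ | ⟨h, h'⟩ <;> rw [h] <;> linarith
  have h2 : (max ‖a‖ ‖b‖) ^ p ≤ ‖a‖ ^ p + ‖b‖ ^ p := by
    rcases max_cases ‖a‖ ‖b‖ with ⟨h, _⟩ | ⟨h, _⟩ <;> rw [h]
    · nlinarith [Real.rpow_nonneg (norm_nonneg b) p]
    · nlinarith [Real.rpow_nonneg (norm_nonneg a) p]
  calc ‖a + b‖ ^ p ≤ (2 * max ‖a‖ ‖b‖) ^ p :=
        Real.rpow_le_rpow (norm_nonneg _) h1 (by linarith)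
    _ = 2 ^ p * (max ‖a‖ ‖b‖) ^ p :=
        Real.mul_rpow (by norm_num) (le_max_of_le_left (norm_nonneg _))
    _ ≤ 2 ^ p * (‖a‖ ^ p + ‖b‖ ^ p) :=
        mul_le_mul_of_nonneg_left h2 (Real.rpow_nonneg (by norm_num) p)

end Aux

/-- If `X` has Rademacher type `p ∈ [1,2]` with constant `T`, there is `C = C(p,T) > 0` such
that for every `n`, every even `m ≥ 2`, every odd `0 < k < m/2` and every `f : ℤ_m^n → X`,
`∫∫ ‖∑_j ε_j [ℰ_j f(x+e_j) - ℰ_j f(x-e_j)]‖^p dτ(ε) dμ(x)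
  ≤ C ∑_j ∫ ‖f(x+e_j) - f(x)‖^p dμ(x)`. -/
theorem Ecal_rademacher_bound (p T : ℝ) (hp₁ : 1 ≤ p) (hp₂ : p ≤ 2) (hT : 0 ≤ T)
    (X : Type*) [NormedAddCommGroup X] [NormedSpace ℝ X] [CompleteSpace X]
    (hX : RademacherType X p T) :
    ∃ C : ℝ, 0 < C ∧
      ∀ (n m k : ℕ) [NeZero m], 2 ≤ m → m % 2 = 0 → Odd k → 0 < k → 2 * k < m →
        ∀ f : (Fin n → ZMod m) → X,
          (∑ x : Fin n → ZMod m, ∑ ε : Fin n → Bool,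
              ‖∑ j : Fin n, (if ε j then (1 : ℝ) else -1) •
                  (Ecal m n k j f (x + Pi.single j 1) -
                   Ecal m n k j f (x - Pi.single j 1))‖ ^ p) / ((m : ℝ) ^ n * 2 ^ n) ≤
            C * ∑ j : Fin n,
              (∑ x : Fin n → ZMod m, ‖f (x + Pi.single j 1) - f x‖ ^ p) / (m : ℝ) ^ n := by
  have hTp : (0:ℝ) ≤ T ^ p := Real.rpow_nonneg hT p
  have h2p : (0:ℝ) < 2 ^ (p + 1) := Real.rpow_pos_of_pos (by norm_num) _
  refine ⟨T ^ p * 2 ^ (p + 1) + 1, by positivity, ?_⟩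
  intro n m k _ hm _ _ _ _ f
  have hm0 : (0:ℝ) < (m : ℝ) := by exact_mod_cast Nat.lt_of_lt_of_le (by norm_num) hm
  have hM : (0:ℝ) < (m : ℝ) ^ n := pow_pos hm0 n
  have h2n : (0:ℝ) < (2:ℝ) ^ n := by positivity
  set e : Fin n → Fin n → ZMod m := fun j => Pi.single j 1 with he
  set A : Fin n → ℝ := fun j => ∑ x : Fin n → ZMod m, ‖f (x + e j) - f x‖ ^ p with hA
  have hA0 : ∀ j, 0 ≤ A j := fun j =>
    Finset.sum_nonneg fun x _ => Real.rpow_nonneg (norm_nonneg _) p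
  -- key estimate for each direction j
  have key : ∀ j : Fin n,
      (∑ x : Fin n → ZMod m,
        ‖Ecal m n k j f (x + e j) - Ecal m n k j f (x - e j)‖ ^ p) ≤ 2 ^ (p + 1) * A j := by
    intro j
    set S := Sjk m n k j with hS
    set N : ℝ := (S.card : ℝ) with hN
    have step1 : ∀ x : Fin n → ZMod m,
        ‖Ecal m n k j f (x + e j) - Ecal m n k j f (x - e j)‖ ^ p ≤
          N⁻¹ * ∑ y ∈ S, ‖f (x + e j + y) - f (x - e j + y)‖ ^ p := by
      intro x
      have : Ecal m n k j f (x + e j) - Ecal m n k j f (x - e j) =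
          N⁻¹ • ∑ y ∈ S, (f (x + e j + y) - f (x - e j + y)) := by
        simp only [Ecal, ← hS, ← hN, ← smul_sub, Finset.sum_sub_distrib]
      rw [this]
      exact jensen_norm_rpow p hp₁ S _
    have step2 :
        (∑ x : Fin n → ZMod m,
          ‖Ecal m n k j f (x + e j) - Ecal m n k j f (x - e j)‖ ^ p) ≤
          ∑ x : Fin n → ZMod m, ‖f (x + e j) - f (x - e j)‖ ^ p := by
      refine le_trans (Finset.sum_le_sum fun x _ => step1 x) ?_
      rw [← Finset.mul_sum]
      have swap : (∑ x : Fin n → ZMod m, ∑ y ∈ S, ‖f (x + e j + y) - f (x - e j + y)‖ ^ p)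
          = S.card * ∑ x : Fin n → ZMod m, ‖f (x + e j) - f (x - e j)‖ ^ p := by
        rw [Finset.sum_comm]
        have : ∀ y ∈ S, (∑ x : Fin n → ZMod m, ‖f (x + e j + y) - f (x - e j + y)‖ ^ p)
            = ∑ x : Fin n → ZMod m, ‖f (x + e j) - f (x - e j)‖ ^ p := by
          intro y _
          have := sum_shift (fun x => ‖f (x + e j) - f (x - e j)‖ ^ p) y
          rw [← this]
          refine Finset.sum_congr rfl fun x _ => ?_
          have h1 : x + e j + y = x + y + e j := by ring
          have h2 : x - e j + y = x + y - e j := by ring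
          rw [h1, h2]
        rw [Finset.sum_congr rfl this, Finset.sum_const, nsmul_eq_mul]
      rw [swap, ← hN]
      rcases eq_or_ne N 0 with h0 | h0
      · rw [h0]
        simp only [inv_zero, zero_mul]
        exact Finset.sum_nonneg fun x _ => Real.rpow_nonneg (norm_nonneg _) p
      · rw [← mul_assoc, inv_mul_cancel₀ h0, one_mul]
    refine step2.trans ?_
    have step3 : ∀ x : Fin n → ZMod m,
        ‖f (x + e j) - f (x - e j)‖ ^ p ≤
          2 ^ p * (‖f (x + e j) - f x‖ ^ p + ‖f x - f (x - e j)‖ ^ p) := by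
      intro x
      have : f (x + e j) - f (x - e j) = (f (x + e j) - f x) + (f x - f (x - e j)) := by abel
      rw [this]
      exact norm_add_rpow_le p hp₁ _ _
    have shift2 : (∑ x : Fin n → ZMod m, ‖f x - f (x - e j)‖ ^ p) = A j := by
      rw [hA]
      have := sum_shift (fun x => ‖f x - f (x - e j)‖ ^ p) (e j)
      rw [← this]
      refine Finset.sum_congr rfl fun x _ => ?_
      have : x + e j - e j = x := by ring
      rw [this, norm_sub_rev]
    calc (∑ x : Fin n → ZMod m, ‖f (x + e j) - f (x - e j)‖ ^ p)
        ≤ ∑ x : Fin n → ZMod m,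
            2 ^ p * (‖f (x + e j) - f x‖ ^ p + ‖f x - f (x - e j)‖ ^ p) :=
          Finset.sum_le_sum fun x _ => step3 x
      _ = 2 ^ p * (A j + A j) := by
          rw [← Finset.mul_sum, Finset.sum_add_distrib, shift2]
      _ = 2 ^ (p + 1) * A j := by
          rw [Real.rpow_add (by norm_num : (0:ℝ) < 2) p 1, Real.rpow_one]; ring
  -- apply Rademacher type pointwise in x
  have H1 : (∑ x : Fin n → ZMod m, ∑ ε : Fin n → Bool,
      ‖∑ j : Fin n, (if ε j then (1 : ℝ) else -1) •
          (Ecal m n k j f (x + e j) - Ecal m n k j f (x - e j))‖ ^ p) ≤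
      2 ^ n * (T ^ p * ∑ j : Fin n, 2 ^ (p + 1) * A j) := by
    have hx : ∀ x : Fin n → ZMod m,
        (∑ ε : Fin n → Bool,
          ‖∑ j : Fin n, (if ε j then (1 : ℝ) else -1) •
              (Ecal m n k j f (x + e j) - Ecal m n k j f (x - e j))‖ ^ p) ≤
          2 ^ n * (T ^ p * ∑ j : Fin n,
            ‖Ecal m n k j f (x + e j) - Ecal m n k j f (x - e j)‖ ^ p) := by
      intro x
      have := hX n (fun j => Ecal m n k j f (x + e j) - Ecal m n k j f (x - e j))
      rw [div_le_iff₀ h2n] at this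
      linarith [this]
    refine le_trans (Finset.sum_le_sum fun x _ => hx x) ?_
    rw [← Finset.mul_sum, ← Finset.mul_sum]
    refine mul_le_mul_of_nonneg_left (mul_le_mul_of_nonneg_left ?_ hTp) h2n.le
    rw [Finset.sum_comm]
    exact Finset.sum_le_sum fun j _ => key j
  -- assemble
  have hsum : (∑ j : Fin n,
      (∑ x : Fin n → ZMod m, ‖f (x + Pi.single j 1) - f x‖ ^ p) / (m : ℝ) ^ n)
      = (∑ j : Fin n, A j) / (m : ℝ) ^ n := by
    rw [Finset.sum_div]
  have hAsum : (0:ℝ) ≤ ∑ j : Fin n, A j := Finset.sum_nonneg fun j _ => hA0 j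
  rw [hsum]
  calc (∑ x : Fin n → ZMod m, ∑ ε : Fin n → Bool,
      ‖∑ j : Fin n, (if ε j then (1 : ℝ) else -1) •
          (Ecal m n k j f (x + Pi.single j 1) -
           Ecal m n k j f (x - Pi.single j 1))‖ ^ p) / ((m : ℝ) ^ n * 2 ^ n)
      ≤ (2 ^ n * (T ^ p * ∑ j : Fin n, 2 ^ (p + 1) * A j)) / ((m : ℝ) ^ n * 2 ^ n) := by
        apply div_le_div_of_nonneg_right H1 (by positivity) |>.trans_eq rfl
    _ = (T ^ p * 2 ^ (p + 1)) * ((∑ j : Fin n, A j) / (m : ℝ) ^ n) := by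
        rw [← Finset.mul_sum]
        field_simp
    _ ≤ (T ^ p * 2 ^ (p + 1) + 1) * ((∑ j : Fin n, A j) / (m : ℝ) ^ n) := by
        apply mul_le_mul_of_nonneg_right (by linarith) (by positivity)
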